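/- Define 𝓡₁(u,v) = (1/√2)·(1+u²+v²)/(1+u²) and 𝓡₂(u,v) = (1/√2)·1/(1+u²). Then (i) for all (u,v) ∈ ℝ², the Jacobian determinant satisfies (∂𝓡₁/∂u)(∂𝓡₂/∂v) − (∂𝓡₁/∂v)(∂𝓡₂/∂u) = 2uv/(1+u²)³; and (ii) the function (u,v) ↦ 2uv/(1+u²)³ is not integrable over the open first quadrant (0,∞)×(0,∞), i.e. ∫₀^∞∫₀^∞ 2uv/(1+u²)³ du dv = +∞. Consequently the exceptional Taub-NUT instanton has infinite L² Ricci curvature energy. -/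

import Mathlib

open Real MeasureTheory

/-- The first Ricci potential of the exceptional Taub-NUT instanton. -/
noncomputable def RicE1 (u v : ℝ) : ℝ :=
  (1 / Real.sqrt 2) * (1 + u ^ 2 + v ^ 2) / (1 + u ^ 2)

/-- The second Ricci potential of the exceptional Taub-NUT instanton. -/
noncomputable def RicE2 (u v : ℝ) : ℝ :=
  (1 / Real.sqrt 2) * 1 / (1 + u ^ 2)

open Set Filter Topology ENNReal NNReal

lemma hpos (u : ℝ) : (0:ℝ) < 1 + u ^ 2 := by positivity

lemma hd_sq (u : ℝ) : HasDerivAt (fun t : ℝ => 1 + t ^ 2) (2 * u) u := by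
  simpa using (hasDerivAt_pow 2 u).const_add 1

lemma hd1u (u v : ℝ) : HasDerivAt (fun t => RicE1 t v)
    (((1 / Real.sqrt 2) * (2 * u) * (1 + u ^ 2)
      - (1 / Real.sqrt 2) * (1 + u ^ 2 + v ^ 2) * (2 * u)) / (1 + u ^ 2) ^ 2) u := by
  have hN : HasDerivAt (fun t : ℝ => (1 / Real.sqrt 2) * (1 + t ^ 2 + v ^ 2))
      ((1 / Real.sqrt 2) * (2 * u)) u := by
    simpa using ((hd_sq u).add_const (v ^ 2)).const_mul (1 / Real.sqrt 2)
  simpa [RicE1, Pi.div_def] using hN.div (hd_sq u) (hpos u).ne'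

lemma hd2u (u v : ℝ) : HasDerivAt (fun t => RicE2 t v)
    ((0 * (1 + u ^ 2) - (1 / Real.sqrt 2) * 1 * (2 * u)) / (1 + u ^ 2) ^ 2) u := by
  simpa [RicE2, Pi.div_def] using (hasDerivAt_const u ((1 / Real.sqrt 2) * 1 : ℝ)).div (hd_sq u) (hpos u).ne'

lemma hd1v (u v : ℝ) : HasDerivAt (fun t => RicE1 u t)
    ((1 / Real.sqrt 2) * (2 * v) / (1 + u ^ 2)) v := by
  have hN : HasDerivAt (fun t : ℝ => (1 / Real.sqrt 2) * (1 + u ^ 2 + t ^ 2))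
      ((1 / Real.sqrt 2) * (2 * v)) v := by
    simpa using ((hasDerivAt_pow 2 v).const_add (1 + u ^ 2)).const_mul (1 / Real.sqrt 2)
  simpa [RicE1] using hN.div_const (1 + u ^ 2)

lemma jac (u v : ℝ) :
    deriv (fun t => RicE1 t v) u * deriv (fun t => RicE2 u t) v
        - deriv (fun t => RicE1 u t) v * deriv (fun t => RicE2 t v) u
      = 2 * u * v / (1 + u ^ 2) ^ 3 := by
  have h2v : deriv (fun t => RicE2 u t) v = 0 := by
    simp [RicE2]
  rw [(hd1u u v).deriv, (hd1v u v).deriv, (hd2u u v).deriv, h2v]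
  have hs : Real.sqrt 2 * Real.sqrt 2 = 2 := Real.mul_self_sqrt (by norm_num)
  have hsne : Real.sqrt 2 ≠ 0 := by positivity
  have h := (hpos u).ne'
  field_simp
  linear_combination (-u * v) * hs

noncomputable def F (u : ℝ) : ℝ := -(1/2) / (1 + u ^ 2) ^ 2

lemma hdF (u : ℝ) : HasDerivAt F (2 * u / (1 + u ^ 2) ^ 3) u := by
  have hD : HasDerivAt (fun t : ℝ => (1 + t ^ 2) ^ 2)
      (↑2 * (1 + u ^ 2) ^ 1 * (2 * u)) u := (hd_sq u).pow 2
  have hDne : ((1 + u ^ 2) ^ 2 : ℝ) ≠ 0 := by positivity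
  have h : HasDerivAt F _ u := (hasDerivAt_const u (-(1/2) : ℝ)).div hD hDne
  convert h using 1
  have hne := (hpos u).ne'
  field_simp
  ring

lemma Ftendsto : Tendsto F atTop (𝓝 (0:ℝ)) := by
  have h : Tendsto (fun u : ℝ => (1 + u ^ 2) ^ 2) atTop atTop := by
    have h2 : Tendsto (fun u : ℝ => 1 + u ^ 2) atTop atTop :=
      tendsto_atTop_add_const_left _ 1 (tendsto_pow_atTop two_ne_zero)
    simpa [Function.comp_def] using (tendsto_pow_atTop (two_ne_zero)).comp h2
  exact Tendsto.div_atTop tendsto_const_nhds h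

lemma base_integrable : IntegrableOn (fun u : ℝ => 2 * u / (1 + u ^ 2) ^ 3) (Ioi 0) :=
  integrableOn_Ioi_deriv_of_nonneg' (fun x _ => hdF x)
    (fun x hx => by have : (0:ℝ) < x := hx; positivity) Ftendsto

lemma base_integral : ∫ u in Ioi (0:ℝ), 2 * u / (1 + u ^ 2) ^ 3 = 1 / 2 := by
  have h := integral_Ioi_of_hasDerivAt_of_nonneg' (fun x _ => hdF x)
    (fun x hx => by have : (0:ℝ) < x := hx; positivity) Ftendsto
  rw [h]
  norm_num [F]

lemma base_lintegral :
    (∫⁻ u in Ioi (0:ℝ), ENNReal.ofReal (2 * u / (1 + u ^ 2) ^ 3)) = ENNReal.ofReal (1/2) := by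
  rw [← base_integral]
  exact (ofReal_integral_eq_lintegral_ofReal base_integrable
    ((ae_restrict_iff' measurableSet_Ioi).2 (ae_of_all _ fun x hx => by
      have : (0:ℝ) < x := hx; positivity))).symm

lemma inner_eq (v : ℝ) (hv : 0 ≤ v) :
    (∫⁻ u in Ioi (0:ℝ), ENNReal.ofReal (2 * u * v / (1 + u ^ 2) ^ 3))
      = ENNReal.ofReal v * ENNReal.ofReal (1/2) := by
  have : ∀ u : ℝ, 2 * u * v / (1 + u ^ 2) ^ 3 = v * (2 * u / (1 + u ^ 2) ^ 3) := by
    intro u; ring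
  simp_rw [this, ENNReal.ofReal_mul hv]
  rw [lintegral_const_mul' _ _ ENNReal.ofReal_ne_top, base_lintegral]

lemma key :
    (∫⁻ v in Set.Ioi (0 : ℝ), ∫⁻ u in Set.Ioi (0 : ℝ),
        ENNReal.ofReal (2 * u * v / (1 + u ^ 2) ^ 3)) = ⊤ := by
  have h1 : (∫⁻ v in Set.Ioi (0 : ℝ), ∫⁻ u in Set.Ioi (0 : ℝ),
        ENNReal.ofReal (2 * u * v / (1 + u ^ 2) ^ 3))
      = ∫⁻ v in Ioi (0:ℝ), ENNReal.ofReal v * ENNReal.ofReal (1/2) := by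
    apply setLIntegral_congr_fun measurableSet_Ioi
    exact fun v hv => inner_eq v (le_of_lt hv)
  rw [h1]
  rw [eq_top_iff]
  calc (⊤ : ℝ≥0∞) = ENNReal.ofReal (1/2) * volume (Ioi (1:ℝ)) := by
        rw [Real.volume_Ioi, ENNReal.mul_top (by simp)]
    _ = ∫⁻ _ in Ioi (1:ℝ), ENNReal.ofReal (1/2) := by rw [setLIntegral_const]
    _ ≤ ∫⁻ v in Ioi (1:ℝ), ENNReal.ofReal v * ENNReal.ofReal (1/2) := by
        apply setLIntegral_mono' measurableSet_Ioi
        intro v hv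
        have h1v : (1:ℝ) ≤ v := le_of_lt hv
        calc ENNReal.ofReal (1/2) = 1 * ENNReal.ofReal (1/2) := (one_mul _).symm
          _ ≤ ENNReal.ofReal v * ENNReal.ofReal (1/2) := by
              gcongr
              simpa using ENNReal.ofReal_le_ofReal h1v
    _ ≤ ∫⁻ v in Ioi (0:ℝ), ENNReal.ofReal v * ENNReal.ofReal (1/2) :=
        lintegral_mono' (Measure.restrict_mono (Ioi_subset_Ioi (by norm_num)) le_rfl) le_rfl

lemma not_int : ¬ IntegrableOn (fun p : ℝ × ℝ => 2 * p.1 * p.2 / (1 + p.1 ^ 2) ^ 3)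
    (Set.Ioi 0 ×ˢ Set.Ioi 0) := by
  intro hInt
  have hfin := hInt.2
  have hmeas : Measurable (fun p : ℝ × ℝ => ENNReal.ofReal (2 * p.1 * p.2 / (1 + p.1 ^ 2) ^ 3)) := by
    apply ENNReal.measurable_ofReal.comp
    apply Measurable.div
    · fun_prop
    · fun_prop
  have hprod : ((volume : Measure ℝ).restrict (Ioi 0)).prod
        ((volume : Measure ℝ).restrict (Ioi 0))
      = (volume : Measure (ℝ × ℝ)).restrict (Set.Ioi 0 ×ˢ Set.Ioi 0) := by
    rw [Measure.volume_eq_prod, Measure.prod_restrict]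
  have hiter := lintegral_prod_symm
    (μ := (volume : Measure ℝ).restrict (Ioi 0)) (ν := (volume : Measure ℝ).restrict (Ioi 0))
    (fun p : ℝ × ℝ => ENNReal.ofReal (2 * p.1 * p.2 / (1 + p.1 ^ 2) ^ 3))
    hmeas.aemeasurable
  have hle : (∫⁻ p, ENNReal.ofReal (2 * p.1 * p.2 / (1 + p.1 ^ 2) ^ 3)
        ∂(((volume : Measure ℝ).restrict (Ioi 0)).prod ((volume : Measure ℝ).restrict (Ioi 0))))
      ≤ ∫⁻ p, ‖2 * p.1 * p.2 / (1 + p.1 ^ 2) ^ 3‖₊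
        ∂(((volume : Measure ℝ).restrict (Ioi 0)).prod ((volume : Measure ℝ).restrict (Ioi 0))) := by
    apply lintegral_mono
    intro p
    exact le_trans (ENNReal.ofReal_le_ofReal (le_abs_self _))
      (le_of_eq (Real.enorm_eq_ofReal_abs _).symm)
  simp only at hiter
  rw [hiter, key, hprod] at hle
  exact lt_irrefl _ (lt_of_lt_of_le hfin (le_trans le_top hle))

/-- (i) The Jacobian determinant of the Ricci potentials equals `2uv/(1+u²)³`; (ii) this
Ricci pseudo-volume density is not integrable over the open first quadrant — its integral
is `+∞`. Consequently the exceptional Taub-NUT instanton has infinite L² Ricci energy. -/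
theorem stmt_19 :
    (∀ u v : ℝ,
      deriv (fun t => RicE1 t v) u * deriv (fun t => RicE2 u t) v
        - deriv (fun t => RicE1 u t) v * deriv (fun t => RicE2 t v) u
      = 2 * u * v / (1 + u ^ 2) ^ 3) ∧
    ¬ IntegrableOn (fun p : ℝ × ℝ => 2 * p.1 * p.2 / (1 + p.1 ^ 2) ^ 3)
        (Set.Ioi 0 ×ˢ Set.Ioi 0) ∧
    (∫⁻ v in Set.Ioi (0 : ℝ), ∫⁻ u in Set.Ioi (0 : ℝ),
        ENNReal.ofReal (2 * u * v / (1 + u ^ 2) ^ 3)) = ⊤ := by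
  exact ⟨jac, not_int, key⟩
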